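/- arXiv:1106.4238 — 5 statements merged into one kernel-verified Lean document; each statement's English description precedes it below -/
import Mathlib

section
/- Fix a positive integer a. Define for each integer m ≥ 1 the real number W(m,a) = (m / ((a+1)·((m-1)·a + m))) · binomial((m-1)²·a + (m-1)·m, a). Then the sequence m ↦ (a!·(a+1)! / m^(2a)) · W(m,a) converges, as m → ∞, to a!·(a+1)^(a-1) (equivalently (a+1)!·(a+1)^(a-2)). In the paper this computes the Euler characteristic χ(Q¹(a,a+1)) of the moduli of stable representations of the complete bipartite quiver Q¹(a,a+1) as the limit lim_{m→∞} χ(K^m(a,a+1))·a!·(a+1)!/m^(2a), using Weist's closed formula W(m,a) for χ(K^m(a,a+1)). -/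
open Filter Real

/-- Weist's closed formula `W(m,a)` for `χ(K^m(a,a+1))`, as a real number. -/
noncomputable def W (m a : ℕ) : ℝ :=
  ((m : ℝ) / (((a : ℝ) + 1) * (((m : ℝ) - 1) * a + m))) *
    (Nat.choose ((m - 1) ^ 2 * a + (m - 1) * m) a : ℝ)

/-- `χ(Q¹(a,a+1)) = lim_{m→∞} χ(K^m(a,a+1))·a!·(a+1)!/m^(2a) = a!·(a+1)^(a-1)`. -/
theorem chi_Q1_a_aplus1 (a : ℕ) (ha : 0 < a) :
    Tendsto (fun m : ℕ =>
        ((Nat.factorial a : ℝ) * (Nat.factorial (a + 1) : ℝ) / (m : ℝ) ^ (2 * a)) * W m a)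
      atTop (nhds ((Nat.factorial a : ℝ) * ((a : ℝ) + 1) ^ (a - 1))) := by
  have hA : ((a:ℝ)+1) ≠ 0 := by positivity
  set h : ℝ → ℝ := fun u => (Nat.factorial (a+1) : ℝ) *
      ((1 / (((a:ℝ)+1) * ((1-u)*a + 1))) *
      ∏ i ∈ Finset.range a, ((1-u)^2*(a:ℝ) + (1-u)*1 - i*u^2)) with hh
  have hcont : ContinuousAt h 0 := by
    apply ContinuousAt.mul continuousAt_const
    apply ContinuousAt.mul
    · apply ContinuousAt.div continuousAt_const (by fun_prop)
      norm_num
      positivity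
    · exact (continuous_finset_prod _ (fun i _ => by fun_prop)).continuousAt
  have h0 : h 0 = (Nat.factorial a : ℝ) * ((a : ℝ) + 1) ^ (a - 1) := by
    simp only [hh]
    rw [Nat.factorial_succ]
    push_cast
    rw [Finset.prod_congr rfl (fun i _ => by ring_nf : ∀ i ∈ Finset.range a,
        ((1-(0:ℝ))^2*(a:ℝ) + (1-0)*1 - i*0^2) = (a:ℝ)+1)]
    rw [Finset.prod_const, Finset.card_range]
    have hpow : ((a:ℝ)+1)^a = ((a:ℝ)+1)^(a-1) * ((a:ℝ)+1) := by
      rw [← pow_succ]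
      congr 1
      omega
    rw [hpow]
    field_simp
    ring
  have hlim : Tendsto (fun m : ℕ => h (1/(m:ℝ))) atTop (nhds (h 0)) :=
    hcont.tendsto.comp tendsto_one_div_atTop_nhds_zero_nat
  rw [← h0]
  apply hlim.congr'
  filter_upwards [eventually_ge_atTop 2] with m hm
  simp only [hh, W]
  have hm1 : (1:ℕ) ≤ m := by omega
  have hmR : (2:ℝ) ≤ (m:ℝ) := by exact_mod_cast hm
  have hm0 : (m:ℝ) ≠ 0 := by linarith
  have haR : (0:ℝ) ≤ (a:ℝ) := Nat.cast_nonneg a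
  have hsq : 1 ≤ (m-1)^2 := Nat.one_le_pow _ _ (by omega)
  have hle : ∀ i ∈ Finset.range a, i ≤ (m-1)^2*a + (m-1)*m := by
    intro i hi
    have hi' : i < a := Finset.mem_range.mp hi
    have : a ≤ (m-1)^2*a := Nat.le_mul_of_pos_left a (by omega)
    omega
  have hchoose : (Nat.choose ((m-1)^2*a+(m-1)*m) a : ℝ) =
      (∏ i ∈ Finset.range a, (((m:ℝ)-1)^2*(a:ℝ) + ((m:ℝ)-1)*(m:ℝ) - i)) / (Nat.factorial a : ℝ) := by
    have hd := Nat.descFactorial_eq_factorial_mul_choose ((m-1)^2*a+(m-1)*m) a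
    rw [Nat.descFactorial_eq_prod_range] at hd
    have hd' : ((∏ i ∈ Finset.range a, ((m-1)^2*a+(m-1)*m - i) : ℕ) : ℝ)
        = (Nat.factorial a : ℝ) * (Nat.choose ((m-1)^2*a+(m-1)*m) a : ℝ) := by
      exact_mod_cast congrArg (Nat.cast : ℕ → ℝ) hd
    rw [Nat.cast_prod] at hd'
    have hterm : ∀ i ∈ Finset.range a, (((m-1)^2*a+(m-1)*m - i : ℕ):ℝ)
        = ((m:ℝ)-1)^2*(a:ℝ) + ((m:ℝ)-1)*(m:ℝ) - (i:ℝ) := fun i hi => by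
      push_cast [Nat.cast_sub (hle i hi), Nat.cast_sub hm1]
      ring
    rw [Finset.prod_congr rfl hterm] at hd'
    rw [eq_div_iff (by positivity : (Nat.factorial a:ℝ) ≠ 0), hd']
    ring
  rw [hchoose]
  have hprod : (∏ i ∈ Finset.range a, ((1-(1/(m:ℝ)))^2*(a:ℝ) + (1-(1/(m:ℝ)))*1 - i*(1/(m:ℝ))^2))
      = (∏ i ∈ Finset.range a, (((m:ℝ)-1)^2*(a:ℝ) + ((m:ℝ)-1)*(m:ℝ) - i)) / ((m:ℝ)^2)^a := by
    rw [Finset.prod_congr rfl (fun i hi => by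
      field_simp : ∀ i ∈ Finset.range a, ((1-(1/(m:ℝ)))^2*(a:ℝ) + (1-(1/(m:ℝ)))*1 - i*(1/(m:ℝ))^2)
        = (((m:ℝ)-1)^2*(a:ℝ) + ((m:ℝ)-1)*(m:ℝ) - i) / (m:ℝ)^2)]
    rw [Finset.prod_div_distrib, Finset.prod_const, Finset.card_range]
  rw [hprod]
  have hden1 : (1-(1/(m:ℝ)))*(a:ℝ) + 1 ≠ 0 := by
    have : (0:ℝ) < 1 - 1/(m:ℝ) := by
      rw [sub_pos]
      rw [div_lt_one (by linarith)]
      linarith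
    positivity
  have hden2 : ((m:ℝ)-1)*(a:ℝ) + (m:ℝ) ≠ 0 := by nlinarith
  have hfac : (Nat.factorial a : ℝ) ≠ 0 := by positivity
  have hpow : ((m:ℝ))^(2*a) = ((m:ℝ)^2)^a := by rw [pow_mul]
  rw [hpow]
  field_simp
end

section
/- Fix a positive integer a. Define for each integer m ≥ 2 the real number W(m,a) = (m / ((a+1)·((m-1)·a + m))) · binomial((m-1)²·a + (m-1)·m, a). Then lim_{m→∞} ln(W(m,a)) / ln(m) = 2a. This is the instance b = a+1 of the paper's Corollary: for fixed coprime (a,b) and m → ∞, ln χ(K^m(a,b)) ∼ (a+b−1)·ln m. -/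
open Filter Real

lemma W_upper (a : ℕ) (ha : 0 < a) {m : ℕ} (hm : 2 ≤ m) :
    W m a ≤ ((a : ℝ) + 1) ^ a * (m : ℝ) ^ (2 * a) := by
  simp only [W]
  have hm2 : (2 : ℝ) ≤ (m : ℝ) := by exact_mod_cast hm
  have ha1 : (1 : ℝ) ≤ (a : ℝ) := by exact_mod_cast ha
  have hma : (0 : ℝ) ≤ ((m : ℝ) - 1) * a := by nlinarith
  have hden : 0 < ((a : ℝ) + 1) * (((m : ℝ) - 1) * a + m) :=
    mul_pos (by linarith) (by linarith)
  have hP : (m : ℝ) / (((a : ℝ) + 1) * (((m : ℝ) - 1) * a + m)) ≤ 1 := by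
    rw [div_le_one hden]
    nlinarith [mul_nonneg (show (0:ℝ) ≤ (a:ℝ) by linarith) hma]
  have hP0 : 0 ≤ (m : ℝ) / (((a : ℝ) + 1) * (((m : ℝ) - 1) * a + m)) := by positivity
  have hN : (m - 1) ^ 2 * a + (m - 1) * m ≤ (a + 1) * m ^ 2 := by
    have h1 : m - 1 ≤ m := Nat.sub_le m 1
    nlinarith [Nat.mul_le_mul h1 h1, Nat.mul_le_mul_right m h1]
  have hC : (Nat.choose ((m - 1) ^ 2 * a + (m - 1) * m) a : ℝ) ≤
      ((a : ℝ) + 1) ^ a * (m : ℝ) ^ (2 * a) := by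
    have h0 := Nat.choose_le_pow ((m - 1) ^ 2 * a + (m - 1) * m) a
    have h2 : ((m - 1) ^ 2 * a + (m - 1) * m) ^ a ≤ ((a + 1) * m ^ 2) ^ a :=
      Nat.pow_le_pow_left hN a
    calc (Nat.choose ((m - 1) ^ 2 * a + (m - 1) * m) a : ℝ)
        ≤ ((((a + 1) * m ^ 2) ^ a : ℕ) : ℝ) := by exact_mod_cast le_trans h0 h2
      _ = ((a : ℝ) + 1) ^ a * (m : ℝ) ^ (2 * a) := by
          rw [Nat.cast_pow, Nat.cast_mul, Nat.cast_add, Nat.cast_one, Nat.cast_pow,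
            mul_pow, ← pow_mul]
  calc ((m : ℝ) / (((a : ℝ) + 1) * (((m : ℝ) - 1) * a + m))) *
      (Nat.choose ((m - 1) ^ 2 * a + (m - 1) * m) a : ℝ)
      ≤ 1 * (((a : ℝ) + 1) ^ a * (m : ℝ) ^ (2 * a)) :=
        mul_le_mul hP hC (by positivity) zero_le_one
    _ = _ := one_mul _

lemma W_lower (a : ℕ) (ha : 0 < a) {m : ℕ} (hm : 2 ≤ m) :
    (m : ℝ) ^ (2 * a) / (((a : ℝ) + 1) ^ 2 * (2 * (a : ℝ)) ^ a) ≤ W m a := by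
  simp only [W]
  set N := (m - 1) ^ 2 * a + (m - 1) * m with hNdef
  have hm2 : (2 : ℝ) ≤ (m : ℝ) := by exact_mod_cast hm
  have ha1 : (1 : ℝ) ≤ (a : ℝ) := by exact_mod_cast ha
  have haN : a ≤ N := by
    have h1 : 0 < (m - 1) ^ 2 := by
      have : 1 ≤ m - 1 := by omega
      positivity
    exact le_trans (Nat.le_mul_of_pos_left a h1) (Nat.le_add_right _ _)
  have hsq : m ^ 2 + 2 * a ≤ 2 * N + 2 := by
    rw [hNdef]
    obtain ⟨k, rfl⟩ := Nat.exists_eq_add_of_le hm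
    have e : 2 + k - 1 = k + 1 := by omega
    rw [e]; nlinarith [Nat.zero_le (k ^ 2 * a), Nat.zero_le (k * a), Nat.zero_le (k ^ 2)]
  have hkey : m ^ 2 ≤ 2 * (N + 1 - a) := by omega
  have hden : 0 < ((a : ℝ) + 1) * (((m : ℝ) - 1) * a + m) :=
    mul_pos (by linarith) (by nlinarith)
  have hP : 1 / ((a : ℝ) + 1) ^ 2 ≤ (m : ℝ) / (((a : ℝ) + 1) * (((m : ℝ) - 1) * a + m)) := by
    rw [div_le_div_iff₀ (by positivity) hden]; nlinarith
  have hfac : (Nat.factorial a : ℝ) ≤ (a : ℝ) ^ a := by exact_mod_cast Nat.factorial_le_pow a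
  have hfac0 : (0 : ℝ) < (Nat.factorial a : ℝ) := by exact_mod_cast Nat.factorial_pos a
  have hchoose : (((N + 1 - a) ^ a : ℕ) : ℝ) / (Nat.factorial a : ℝ) ≤ (Nat.choose N a : ℝ) := by
    exact_mod_cast Nat.pow_le_choose a N
  set X : ℝ := ((N + 1 - a : ℕ) : ℝ) with hXdef
  have hX0 : 0 ≤ X := Nat.cast_nonneg _
  have hcast : (m : ℝ) ^ 2 ≤ 2 * X := by
    rw [hXdef]; exact_mod_cast hkey
  have hC : (m : ℝ) ^ (2 * a) / (2 * (a : ℝ)) ^ a ≤ (Nat.choose N a : ℝ) := by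
    refine le_trans ?_ hchoose
    rw [div_le_div_iff₀ (by positivity) hfac0]
    push_cast
    have hnum : (m : ℝ) ^ 2 * a ≤ X * (2 * a) := by nlinarith
    have e1 : ((m : ℝ) ^ 2 * a) ^ a ≤ (X * (2 * a)) ^ a :=
      pow_le_pow_left₀ (by positivity) hnum a
    calc (m : ℝ) ^ (2 * a) * (Nat.factorial a : ℝ)
        ≤ (m : ℝ) ^ (2 * a) * (a : ℝ) ^ a :=
          mul_le_mul_of_nonneg_left hfac (by positivity)
      _ = ((m : ℝ) ^ 2 * a) ^ a := by rw [mul_pow, pow_mul]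
      _ ≤ (X * (2 * a)) ^ a := e1
      _ = X ^ a * (2 * a) ^ a := mul_pow _ _ _
  have hfinal : (1 / ((a : ℝ) + 1) ^ 2) * ((m : ℝ) ^ (2 * a) / (2 * (a : ℝ)) ^ a) ≤
      ((m : ℝ) / (((a : ℝ) + 1) * (((m : ℝ) - 1) * a + m))) * (Nat.choose N a : ℝ) :=
    mul_le_mul hP hC (by positivity) (by positivity)
  have e : (1 / ((a : ℝ) + 1) ^ 2) * ((m : ℝ) ^ (2 * a) / (2 * (a : ℝ)) ^ a) =
      (m : ℝ) ^ (2 * a) / (((a : ℝ) + 1) ^ 2 * (2 * (a : ℝ)) ^ a) := by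
    rw [div_mul_div_comm, one_mul]
  rw [← e]
  exact hfinal

/-- `lim_{m→∞} ln(W(m,a)) / ln(m) = 2a`, the case `b = a+1` of
`ln χ(K^m(a,b)) ∼ (a+b−1)·ln m`. -/
theorem log_chi_asymp (a : ℕ) (ha : 0 < a) :
    Tendsto (fun m : ℕ => Real.log (W m a) / Real.log m)
      atTop (nhds (2 * (a : ℝ))) := by
  have ha1 : (1 : ℝ) ≤ (a : ℝ) := by exact_mod_cast ha
  set c₁ : ℝ := Real.log (((a : ℝ) + 1) ^ 2 * (2 * (a : ℝ)) ^ a) with hc₁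
  set c₂ : ℝ := (a : ℝ) * Real.log ((a : ℝ) + 1) with hc₂
  have hlog : Tendsto (fun m : ℕ => Real.log m) atTop atTop :=
    Real.tendsto_log_atTop.comp tendsto_natCast_atTop_atTop
  have hlo : Tendsto (fun m : ℕ => 2 * (a : ℝ) - c₁ / Real.log m) atTop
      (nhds (2 * (a : ℝ))) := by
    have : Tendsto (fun m : ℕ => c₁ / Real.log m) atTop (nhds 0) :=
      Tendsto.div_atTop tendsto_const_nhds hlog
    simpa using tendsto_const_nhds.sub this
  have hhi : Tendsto (fun m : ℕ => 2 * (a : ℝ) + c₂ / Real.log m) atTop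
      (nhds (2 * (a : ℝ))) := by
    have : Tendsto (fun m : ℕ => c₂ / Real.log m) atTop (nhds 0) :=
      Tendsto.div_atTop tendsto_const_nhds hlog
    simpa using tendsto_const_nhds.add this
  refine tendsto_of_tendsto_of_tendsto_of_le_of_le' hlo hhi ?_ ?_
  · -- lower bound eventually
    filter_upwards [eventually_ge_atTop 3] with m hm
    have hm2 : 2 ≤ m := by omega
    have hm1 : (1 : ℝ) < (m : ℝ) := by exact_mod_cast (by omega : 1 < m)
    have hlm : 0 < Real.log m := Real.log_pos hm1
    have hm0 : (0 : ℝ) < (m : ℝ) := by positivity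
    have hD : (0 : ℝ) < ((a : ℝ) + 1) ^ 2 * (2 * (a : ℝ)) ^ a := by positivity
    have hL : (0 : ℝ) < (m : ℝ) ^ (2 * a) / (((a : ℝ) + 1) ^ 2 * (2 * (a : ℝ)) ^ a) := by
      positivity
    have hWlow := W_lower a ha hm2
    have hlogW : 2 * (a : ℝ) * Real.log m - c₁ ≤ Real.log (W m a) := by
      have h := Real.log_le_log hL hWlow
      rw [Real.log_div (by positivity) (ne_of_gt hD), Real.log_pow] at h
      rw [hc₁]
      push_cast at h
      linarith
    rw [le_div_iff₀ hlm]
    have e : (2 * (a : ℝ) - c₁ / Real.log m) * Real.log m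
        = 2 * (a : ℝ) * Real.log m - c₁ := by
      rw [sub_mul, div_mul_cancel₀ _ (ne_of_gt hlm)]
    rw [e]
    exact hlogW
  · -- upper bound eventually
    filter_upwards [eventually_ge_atTop 3] with m hm
    have hm2 : 2 ≤ m := by omega
    have hm1 : (1 : ℝ) < (m : ℝ) := by exact_mod_cast (by omega : 1 < m)
    have hlm : 0 < Real.log m := Real.log_pos hm1
    have hL : (0 : ℝ) < (m : ℝ) ^ (2 * a) / (((a : ℝ) + 1) ^ 2 * (2 * (a : ℝ)) ^ a) := by
      positivity
    have hW0 : 0 < W m a := lt_of_lt_of_le hL (W_lower a ha hm2)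
    have hlogW : Real.log (W m a) ≤ c₂ + 2 * (a : ℝ) * Real.log m := by
      have h := Real.log_le_log hW0 (W_upper a ha hm2)
      rw [Real.log_mul (by positivity) (by positivity), Real.log_pow, Real.log_pow] at h
      rw [hc₂]
      push_cast at h
      linarith
    rw [div_le_iff₀ hlm]
    calc Real.log (W m a) ≤ c₂ + 2 * (a : ℝ) * Real.log m := hlogW
      _ = (2 * (a : ℝ) + c₂ / Real.log m) * Real.log m := by field_simp; ring
end

section
/- For all integers m ≥ 2 and a ≥ 1, the integer (a+1)·((m−1)·a + m) divides m · binomial((m−1)²·a + (m−1)·m, a), and the quotient m · binomial((m−1)²·a + (m−1)·m, a) / ((a+1)·((m−1)·a + m)) is a positive integer. (This quotient is Weist's closed formula for the Euler characteristic χ(K^m(a,a+1)) of the nonempty moduli space of stable representations of the m-Kronecker quiver of dimension vector (a, a+1), hence it is a positive integer.) -/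
/-- Weist's formula gives a positive integer: `(a+1)·((m−1)·a+m)` divides
`m·C((m−1)²·a+(m−1)·m, a)`, and the quotient is positive. -/
theorem weist_integrality (m a : ℕ) (hm : 2 ≤ m) (ha : 1 ≤ a) :
    ((a + 1) * ((m - 1) * a + m)) ∣ (m * Nat.choose ((m - 1) ^ 2 * a + (m - 1) * m) a) ∧
      0 < m * Nat.choose ((m - 1) ^ 2 * a + (m - 1) * m) a / ((a + 1) * ((m - 1) * a + m)) := by
  obtain ⟨k, rfl⟩ : ∃ k, m = k + 2 := ⟨m - 2, by omega⟩
  have hm1 : (k + 2) - 1 = k + 1 := rfl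
  rw [hm1]
  set N : ℕ := (k + 1) ^ 2 * a + (k + 1) * (k + 2) with hN
  set C : ℕ := Nat.choose N a with hC
  set s : ℕ := (k + 1) * a + (k + 2) with hs
  have hNa : N = ((k ^ 2 + 2 * k) * a + (k + 1) * (k + 2)) + a := by rw [hN]; ring
  have hNsub : N - a = (k ^ 2 + 2 * k) * a + (k + 1) * (k + 2) := by omega
  -- divisibility by (a+1)
  have key1 : (a + 1) ∣ (N - a) * C := by
    rw [hC, mul_comm]
    exact ⟨Nat.choose N (a + 1), (Nat.choose_succ_right_eq N a).symm.trans (mul_comm _ _)⟩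
  have heq1 : (k + 2) * C + (k ^ 2 + 2 * k) * ((a + 1) * C) = (N - a) * C := by
    rw [hNsub]; ring
  have dvd1 : (a + 1) ∣ (k + 2) * C := by
    have h2 : (a + 1) ∣ (k ^ 2 + 2 * k) * ((a + 1) * C) := ⟨(k ^ 2 + 2 * k) * C, by ring⟩
    have := Nat.dvd_sub key1 h2
    have hrw : (N - a) * C - (k ^ 2 + 2 * k) * ((a + 1) * C) = (k + 2) * C := by omega
    rwa [hrw] at this
  -- divisibility by s
  have hNs : N = (k + 1) * s := by rw [hs]; ring
  have hN1 : N - 1 + 1 = N := by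
    have : 0 < N := by rw [hN]; positivity
    omega
  have ha1 : a - 1 + 1 = a := by omega
  have key2 : a * C = N * Nat.choose (N - 1) (a - 1) := by
    have h := Nat.add_one_mul_choose_eq (N - 1) (a - 1)
    rw [hN1, ha1] at h
    rw [hC, mul_comm]
    exact h.symm
  have heq2 : (k + 2) * C + (k + 1) * (a * C) = s * C := by rw [hs]; ring
  have dvd2 : s ∣ (k + 2) * C := by
    have h2 : s ∣ (k + 1) * (a * C) := by
      rw [key2, hNs]; exact ⟨(k + 1) * ((k + 1) * Nat.choose (N - 1) (a - 1)), by rw [hNs]; ring⟩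
    have h3 : s ∣ s * C := ⟨C, rfl⟩
    have := Nat.dvd_sub h3 h2
    have hrw : s * C - (k + 1) * (a * C) = (k + 2) * C := by omega
    rwa [hrw] at this
  -- coprimality
  have hcop : Nat.Coprime (a + 1) s := by
    have hsval : s = 1 + (a + 1) * (k + 1) := by rw [hs]; ring
    rw [hsval, Nat.coprime_add_mul_left_right]
    exact Nat.coprime_one_right _
  have hdvd : (a + 1) * s ∣ (k + 2) * C :=
    hcop.mul_dvd_of_dvd_of_dvd dvd1 dvd2
  refine ⟨hdvd, ?_⟩
  have hCpos : 0 < C := Nat.choose_pos (by omega)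
  have hpos : 0 < (k + 2) * C := by positivity
  exact Nat.div_pos (Nat.le_of_dvd hpos hdvd) (by positivity)
end

section
/- Fix an integer m ≥ 3 and set c = (m−1)². Define for each integer a ≥ 1 the real number W(m,a) = (m / ((a+1)·((m−1)·a + m))) · binomial((m−1)²·a + (m−1)·m, a). Then lim_{a→∞} ln(W(m,a)) / a = c·ln(c) − (c−1)·ln(c−1). (This is the value of the Douglas growth ratio lim_{a→∞} ln χ(K^m(a,a+1))/a determined from Weist's explicit formula; it corresponds to slope ratio r = b/a → 1.) -/
open Filter Real

lemma aux_bdd {f : ℕ → ℝ} {L : ℝ} (h : Tendsto f atTop (nhds L)) :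
    Tendsto (fun a : ℕ => f a / (a : ℝ)) atTop (nhds 0) := by
  simpa [div_eq_mul_inv, one_div] using h.mul tendsto_one_div_atTop_nhds_zero_nat

lemma aux_affine (k b : ℝ) (hk : 0 < k) (hb : 0 ≤ b) :
    Tendsto (fun a : ℕ => Real.log (k * a + b) / (a : ℝ)) atTop (nhds 0) := by
  have hcomp : Tendsto (fun a : ℕ => k * (a : ℝ) + b) atTop atTop :=
    tendsto_atTop_add_const_right _ b
      (Tendsto.const_mul_atTop hk tendsto_natCast_atTop_atTop)
  have h1 : Tendsto (fun a : ℕ => Real.log (k * a + b) / (k * a + b)) atTop (nhds 0) :=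
    (Real.isLittleO_log_id_atTop.tendsto_div_nhds_zero).comp hcomp
  have h2 : Tendsto (fun a : ℕ => (k * (a : ℝ) + b) / a) atTop (nhds k) := by
    have h0 : Tendsto (fun a : ℕ => k + b / (a : ℝ)) atTop (nhds (k + 0)) :=
      tendsto_const_nhds.add (tendsto_const_div_atTop_nhds_zero_nat b)
    rw [add_zero] at h0
    refine h0.congr' ?_
    filter_upwards [eventually_ge_atTop 1] with a ha
    have hx : (0:ℝ) < a := by exact_mod_cast ha
    field_simp
  have h3 := h1.mul h2
  rw [zero_mul] at h3
  refine h3.congr' ?_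
  filter_upwards [eventually_ge_atTop 1] with a ha
  have hx : (0:ℝ) < a := by exact_mod_cast ha
  have hq : (0:ℝ) < k * a + b := by
    have : k ≤ k * a := le_mul_of_one_le_right hk.le (by exact_mod_cast ha)
    linarith
  field_simp

lemma aux_stirling (g : ℕ → ℕ) (hg : Tendsto g atTop atTop) :
    Tendsto (fun a : ℕ => Real.log (Stirling.stirlingSeq (g a)) / (a : ℝ)) atTop (nhds 0) := by
  have hsp : (0:ℝ) < Real.sqrt Real.pi := Real.sqrt_pos.mpr Real.pi_pos
  exact aux_bdd (((Real.continuousAt_log hsp.ne').tendsto).comp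
    (Stirling.tendsto_stirlingSeq_sqrt_pi.comp hg))

lemma aux_logfact (n : ℕ) (hn : 1 ≤ n) :
    Real.log (n.factorial : ℝ) = Real.log (Stirling.stirlingSeq n)
      + 1 / 2 * Real.log (2 * n) + n * (Real.log n - 1) := by
  have h := Stirling.log_stirlingSeq_formula n
  have hne : ((n : ℝ)) ≠ 0 := by exact_mod_cast Nat.one_le_iff_ne_zero.mp hn
  have he : Real.log ((n : ℝ) / Real.exp 1) = Real.log n - 1 := by
    rw [Real.log_div hne (Real.exp_ne_zero 1), Real.log_exp]
  rw [he] at h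
  linarith

/-- Auxiliary: top dimension in Weist's binomial. -/
def Naux (m a : ℕ) : ℕ := (m - 1) ^ 2 * a + (m - 1) * m

/-- Auxiliary: `Naux m a - a`. -/
def Kaux (m a : ℕ) : ℕ := ((m - 1) ^ 2 - 1) * a + (m - 1) * m

/-- The Douglas growth ratio at slope `r = 1`: for fixed `m ≥ 3` and `c = (m−1)²`,
`lim_{a→∞} ln(W(m,a))/a = c·ln c − (c−1)·ln(c−1)`. -/
theorem douglas_growth_ratio (m : ℕ) (hm : 3 ≤ m) :
    Tendsto (fun a : ℕ => Real.log (W m a) / (a : ℝ)) atTop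
      (nhds ((((m : ℝ) - 1) ^ 2) * Real.log (((m : ℝ) - 1) ^ 2) -
        ((((m : ℝ) - 1) ^ 2) - 1) * Real.log ((((m : ℝ) - 1) ^ 2) - 1))) := by
  have hm3 : (3:ℝ) ≤ (m:ℝ) := by exact_mod_cast hm
  set c : ℝ := ((m:ℝ) - 1) ^ 2 with hc_def
  set d : ℝ := ((m:ℝ) - 1) * m with hd_def
  have hc4 : (4:ℝ) ≤ c := by rw [hc_def]; nlinarith
  have hcpos : (0:ℝ) < c := by linarith
  have hc1 : (0:ℝ) < c - 1 := by linarith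
  have hdpos : (0:ℝ) < d := by rw [hd_def]; nlinarith
  have hm1 : 1 ≤ m := by omega
  have hm1cast : ((m - 1 : ℕ) : ℝ) = (m:ℝ) - 1 := by
    rw [Nat.cast_sub hm1, Nat.cast_one]
  have hcn1 : 1 ≤ (m - 1) ^ 2 := by
    have h2 : 2 ≤ m - 1 := by omega
    calc 1 ≤ 2 * 2 := by norm_num
    _ ≤ (m-1) * (m-1) := Nat.mul_le_mul h2 h2
    _ = (m-1)^2 := (sq (m-1)).symm
  have hdm1 : 1 ≤ (m - 1) * m := Nat.mul_pos (by omega) (by omega)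
  have haN : ∀ a, a ≤ Naux m a := fun a =>
    le_trans (Nat.le_mul_of_pos_left a hcn1) (Nat.le_add_right _ _)
  have hN1 : ∀ a, 1 ≤ Naux m a := fun a => le_trans hdm1 (Nat.le_add_left _ _)
  have hK1 : ∀ a, 1 ≤ Kaux m a := fun a => le_trans hdm1 (Nat.le_add_left _ _)
  have hNK : ∀ a, Naux m a - a = Kaux m a := by
    intro a
    have h1 : a ≤ (m - 1) ^ 2 * a := Nat.le_mul_of_pos_left a hcn1
    have h2 : ((m - 1) ^ 2 - 1) * a = (m - 1) ^ 2 * a - a := by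
      rw [Nat.sub_mul, one_mul]
    unfold Naux Kaux
    rw [h2, Nat.sub_add_comm h1]
  have hNcast : ∀ a : ℕ, ((Naux m a : ℕ) : ℝ) = c * a + d := by
    intro a
    unfold Naux
    push_cast [hm1cast]
    ring
  have hKcast : ∀ a : ℕ, ((Kaux m a : ℕ) : ℝ) = (c - 1) * a + d := by
    intro a
    unfold Kaux
    push_cast [Nat.cast_sub hcn1, hm1cast]
    ring
  -- the eventual identity
  have hE : (fun a : ℕ =>
      (Real.log (m : ℝ) / a - Real.log ((a : ℝ) + 1) / a
        - Real.log (((m : ℝ) - 1) * a + m) / a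
        + Real.log (Stirling.stirlingSeq (Naux m a)) / a
        + 1 / 2 * (Real.log (2 * ((Naux m a : ℕ) : ℝ)) / a)
        - Real.log (Stirling.stirlingSeq a) / a
        - 1 / 2 * (Real.log (2 * (a : ℝ)) / a)
        - Real.log (Stirling.stirlingSeq (Kaux m a)) / a
        - 1 / 2 * (Real.log (2 * ((Kaux m a : ℕ) : ℝ)) / a))
      + ((c + d / a) * Real.log (c + d / a)
        - ((c + d / a) - 1) * Real.log ((c + d / a) - 1)))
      =ᶠ[atTop] (fun a : ℕ => Real.log (W m a) / (a : ℝ)) := by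
    filter_upwards [eventually_ge_atTop 1] with a ha
    have hx : (0:ℝ) < a := by exact_mod_cast ha
    set u : ℝ := c + d / (a : ℝ) with hu_def
    have hdapos : (0:ℝ) < d / a := div_pos hdpos hx
    have hu : (0:ℝ) < u := by rw [hu_def]; linarith
    have hu1 : (0:ℝ) < u - 1 := by rw [hu_def]; linarith
    have hNx : ((Naux m a : ℕ) : ℝ) = a * u := by
      rw [hNcast a, hu_def]; field_simp
    have hKx : ((Kaux m a : ℕ) : ℝ) = a * (u - 1) := by
      rw [hKcast a, hu_def]; field_simp; ring
    have hlogN : Real.log ((Naux m a : ℕ) : ℝ) = Real.log a + Real.log u := by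
      rw [hNx, Real.log_mul hx.ne' hu.ne']
    have hlogK : Real.log ((Kaux m a : ℕ) : ℝ) = Real.log a + Real.log (u - 1) := by
      rw [hKx, Real.log_mul hx.ne' hu1.ne']
    have hCpos : 0 < Nat.choose (Naux m a) a := Nat.choose_pos (haN a)
    have hC : ((Nat.choose (Naux m a) a : ℕ) : ℝ) ≠ 0 := by
      exact_mod_cast hCpos.ne'
    have hfa : ((Nat.factorial a : ℕ) : ℝ) ≠ 0 := by
      exact_mod_cast (Nat.factorial_pos a).ne'
    have hfN : ((Nat.factorial (Naux m a) : ℕ) : ℝ) ≠ 0 := by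
      exact_mod_cast (Nat.factorial_pos _).ne'
    have hfK : ((Nat.factorial (Kaux m a) : ℕ) : ℝ) ≠ 0 := by
      exact_mod_cast (Nat.factorial_pos _).ne'
    have hfact : ((Nat.choose (Naux m a) a : ℕ) : ℝ) * (Nat.factorial a : ℝ)
        * (Nat.factorial (Kaux m a) : ℝ) = (Nat.factorial (Naux m a) : ℝ) := by
      have h := Nat.choose_mul_factorial_mul_factorial (haN a)
      rw [hNK a] at h
      exact_mod_cast congrArg (Nat.cast : ℕ → ℝ) h
    have hlogC : Real.log ((Nat.choose (Naux m a) a : ℕ) : ℝ)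
        = Real.log (Nat.factorial (Naux m a) : ℝ) - Real.log (Nat.factorial a : ℝ)
          - Real.log (Nat.factorial (Kaux m a) : ℝ) := by
      have h := congrArg Real.log hfact
      rw [Real.log_mul (mul_ne_zero hC hfa) hfK, Real.log_mul hC hfa] at h
      linarith
    have hmpos : (0:ℝ) < (m:ℝ) := by linarith
    have hA1 : (0:ℝ) < (a:ℝ) + 1 := by linarith
    have hQ : (0:ℝ) < ((m:ℝ) - 1) * a + m := by
      have h2 : (0:ℝ) ≤ ((m:ℝ) - 1) * a := mul_nonneg (by linarith) hx.le
      linarith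
    have hlogW : Real.log (W m a)
        = Real.log (m : ℝ) - Real.log ((a : ℝ) + 1) - Real.log (((m : ℝ) - 1) * a + m)
          + Real.log ((Nat.choose (Naux m a) a : ℕ) : ℝ) := by
      unfold W
      show Real.log ((m : ℝ) / (((a : ℝ) + 1) * (((m : ℝ) - 1) * a + m))
          * ((Nat.choose (Naux m a) a : ℕ) : ℝ)) = _
      rw [Real.log_mul (div_ne_zero hmpos.ne' (mul_pos hA1 hQ).ne') hC,
        Real.log_div hmpos.ne' (mul_pos hA1 hQ).ne', Real.log_mul hA1.ne' hQ.ne']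
      ring
    rw [hlogW, hlogC, aux_logfact (Naux m a) (hN1 a), aux_logfact a ha,
      aux_logfact (Kaux m a) (hK1 a), hlogN, hlogK, hNx, hKx]
    field_simp
    ring
  -- the limits
  have htN : Tendsto (fun a => Naux m a) atTop atTop :=
    tendsto_atTop_mono haN tendsto_id
  have haK : ∀ a, a ≤ Kaux m a := by
    intro a
    refine le_trans (Nat.le_mul_of_pos_left a ?_) (Nat.le_add_right _ _)
    have h2 : 2 ≤ m - 1 := by omega
    have : 4 ≤ (m - 1) ^ 2 := by
      calc 4 = 2 * 2 := by norm_num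
      _ ≤ (m-1) * (m-1) := Nat.mul_le_mul h2 h2
      _ = (m-1)^2 := (sq (m-1)).symm
    omega
  have htK : Tendsto (fun a => Kaux m a) atTop atTop :=
    tendsto_atTop_mono haK tendsto_id
  have t1 : Tendsto (fun a : ℕ => Real.log (m : ℝ) / (a : ℝ)) atTop (nhds 0) :=
    aux_bdd tendsto_const_nhds
  have t2 : Tendsto (fun a : ℕ => Real.log ((a : ℝ) + 1) / (a : ℝ)) atTop (nhds 0) :=
    (aux_affine 1 1 one_pos zero_le_one).congr (fun a => by norm_num)
  have t3 : Tendsto (fun a : ℕ => Real.log (((m : ℝ) - 1) * a + m) / (a : ℝ)) atTop (nhds 0) :=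
    aux_affine ((m:ℝ) - 1) m (by linarith) (by positivity)
  have t4 := aux_stirling _ htN
  have t5 : Tendsto (fun a : ℕ => 1 / 2 * (Real.log (2 * ((Naux m a : ℕ) : ℝ)) / a))
      atTop (nhds (1 / 2 * 0)) := by
    refine Tendsto.const_mul _ ?_
    refine (aux_affine (2 * c) (2 * d) (by linarith) (by linarith)).congr (fun a => ?_)
    rw [show 2 * c * (a:ℝ) + 2 * d = 2 * (c * a + d) by ring, ← hNcast a]
  have t6 := aux_stirling id tendsto_id
  have t7 : Tendsto (fun a : ℕ => 1 / 2 * (Real.log (2 * (a : ℝ)) / a))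
      atTop (nhds (1 / 2 * 0)) := by
    refine Tendsto.const_mul _ ?_
    exact (aux_affine 2 0 two_pos le_rfl).congr (fun a => by norm_num)
  have t8 := aux_stirling _ htK
  have t9 : Tendsto (fun a : ℕ => 1 / 2 * (Real.log (2 * ((Kaux m a : ℕ) : ℝ)) / a))
      atTop (nhds (1 / 2 * 0)) := by
    refine Tendsto.const_mul _ ?_
    refine (aux_affine (2 * (c - 1)) (2 * d) (by linarith) (by linarith)).congr (fun a => ?_)
    rw [show 2 * (c - 1) * (a:ℝ) + 2 * d = 2 * ((c - 1) * a + d) by ring, ← hKcast a]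
  have hzero := ((((((((t1.sub t2).sub t3).add t4).add t5).sub t6).sub t7).sub t8).sub t9)
  have hu : Tendsto (fun a : ℕ => c + d / (a : ℝ)) atTop (nhds c) := by
    have h0 : Tendsto (fun a : ℕ => c + d / (a : ℝ)) atTop (nhds (c + 0)) :=
      Tendsto.add tendsto_const_nhds (tendsto_const_div_atTop_nhds_zero_nat d)
    simpa using h0
  have hlogu : Tendsto (fun a : ℕ => Real.log (c + d / (a : ℝ))) atTop (nhds (Real.log c)) :=
    ((Real.continuousAt_log hcpos.ne').tendsto).comp hu
  have hu1 : Tendsto (fun a : ℕ => (c + d / (a : ℝ)) - 1) atTop (nhds (c - 1)) :=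
    hu.sub tendsto_const_nhds
  have hlogv : Tendsto (fun a : ℕ => Real.log ((c + d / (a : ℝ)) - 1)) atTop
      (nhds (Real.log (c - 1))) :=
    ((Real.continuousAt_log hc1.ne').tendsto).comp hu1
  have hmain := (hu.mul hlogu).sub (hu1.mul hlogv)
  have htot := hzero.add hmain
  norm_num at htot
  exact htot.congr' hE
end

section
/- Fix a positive integer a. Define for each integer m ≥ 1 the real number W(m,a) = (m / ((a+1)·((m−1)·a + m))) · binomial((m−1)²·a + (m−1)·m, a). Then lim_{m→∞} a! · W(m,a) / m^(2a) = (a+1)^(a−2) (as a real number; for a = 1 this value is 1/2). Equivalently, χ(K^m(a,a+1)) is asymptotic, as m → ∞, to (a+1)^(a−2) · m^(2a) / a!, the first-order approximation in m of the Euler characteristic of the m-Kronecker quiver moduli provided by the MPS formula. -/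
open Filter Real

noncomputable def Wg (a : ℕ) (x : ℝ) : ℝ :=
  (x / (((a : ℝ) + 1) * ((x - 1) * a + x))) *
    ∏ i ∈ Finset.range a, (((x - 1) ^ 2 * a + (x - 1) * x - i) / x ^ 2)

lemma tendsto_Wg (a : ℕ) :
    Tendsto (Wg a) atTop (nhds (((a : ℝ) + 1) ^ ((a : ℤ) - 2))) := by
  have hne : ((a : ℝ) + 1) ≠ 0 := by positivity
  have hinv : Tendsto (fun x : ℝ => x⁻¹) atTop (nhds 0) := tendsto_inv_atTop_zero
  -- prefactor
  have h1 : Tendsto (fun x : ℝ => x / (((a : ℝ) + 1) * ((x - 1) * a + x))) atTop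
      (nhds ((((a : ℝ) + 1) * ((a : ℝ) + 1))⁻¹)) := by
    have key : Tendsto (fun x : ℝ => ((((a : ℝ) + 1) * ((1 - x⁻¹) * a + 1))⁻¹)) atTop
        (nhds ((((a : ℝ) + 1) * ((a : ℝ) + 1))⁻¹)) := by
      apply Tendsto.inv₀
      · have h : Tendsto (fun x : ℝ => (1 - x⁻¹) * a + 1) atTop (nhds ((a : ℝ) + 1)) := by
          have := (((tendsto_const_nhds : Tendsto (fun _ : ℝ => (1:ℝ)) atTop (nhds 1)).sub hinv).mul_const (a : ℝ)).add_const (1 : ℝ)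
          simpa using this
        simpa using (tendsto_const_nhds.mul h)
      · positivity
    apply key.congr'
    filter_upwards [eventually_ge_atTop (1 : ℝ)] with x hx
    have hx0 : x ≠ 0 := by linarith
    have hD : ((a : ℝ) + 1) * ((x - 1) * a + x)
        = x * (((a : ℝ) + 1) * ((1 - x⁻¹) * a + 1)) := by
      field_simp
    rw [eq_comm, hD, div_mul_cancel_left₀ hx0]
  -- factors
  have h2 : ∀ i : ℕ, Tendsto (fun x : ℝ => ((x - 1) ^ 2 * a + (x - 1) * x - i) / x ^ 2)
      atTop (nhds ((a : ℝ) + 1)) := by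
    intro i
    have key : Tendsto (fun x : ℝ => (1 - x⁻¹) ^ 2 * a + (1 - x⁻¹) - i * (x⁻¹) ^ 2)
        atTop (nhds ((a : ℝ) + 1)) := by
      have h1' := (tendsto_const_nhds : Tendsto (fun _ : ℝ => (1:ℝ)) atTop (nhds 1)).sub hinv
      have := (((h1'.pow 2).mul_const (a : ℝ)).add h1').sub
        ((hinv.pow 2).const_mul (i : ℝ))
      simpa using this
    apply key.congr'
    filter_upwards [eventually_ge_atTop (1 : ℝ)] with x hx
    have hx0 : x ≠ 0 := by linarith
    rw [eq_comm, div_eq_iff (pow_ne_zero 2 hx0)]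
    field_simp
  have hprod : Tendsto (fun x : ℝ =>
      ∏ i ∈ Finset.range a, (((x - 1) ^ 2 * a + (x - 1) * x - i) / x ^ 2)) atTop
      (nhds (((a : ℝ) + 1) ^ a)) := by
    have := tendsto_finset_prod (Finset.range a)
      (fun i _ => h2 i)
    simpa [Finset.prod_const] using this
  have := h1.mul hprod
  have hval : ((((a : ℝ) + 1) * ((a : ℝ) + 1))⁻¹) * ((a : ℝ) + 1) ^ a
      = ((a : ℝ) + 1) ^ ((a : ℤ) - 2) := by
    rw [zpow_sub₀ hne, zpow_natCast, zpow_two, div_eq_mul_inv, mul_comm]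
  rw [hval] at this
  exact this

/-- First-order approximation in `m`: `lim_{m→∞} a!·W(m,a)/m^(2a) = (a+1)^(a−2)`
(integer power, so `1/2` when `a = 1`). -/
theorem first_order_approx (a : ℕ) (ha : 0 < a) :
    Tendsto (fun m : ℕ => (Nat.factorial a : ℝ) * W m a / (m : ℝ) ^ (2 * a))
      atTop (nhds (((a : ℝ) + 1) ^ ((a : ℤ) - 2))) := by
  have key := (tendsto_Wg a).comp (tendsto_natCast_atTop_atTop (R := ℝ))
  apply key.congr'
  filter_upwards [eventually_ge_atTop 2] with m hm
  have hm1 : 1 ≤ m := le_trans (by norm_num) hm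
  have hx0 : (m : ℝ) ≠ 0 := by positivity
  set N : ℕ := (m - 1) ^ 2 * a + (m - 1) * m with hN
  have hcast1 : ((m - 1 : ℕ) : ℝ) = (m : ℝ) - 1 := by
    push_cast [hm1]; ring
  -- N - i casts for i < a
  have hNi : ∀ i ∈ Finset.range a, ((N - i : ℕ) : ℝ)
      = ((m : ℝ) - 1) ^ 2 * a + ((m : ℝ) - 1) * (m : ℝ) - i := by
    intro i hi
    have hia : i < a := Finset.mem_range.mp hi
    have hm1' : 1 ≤ m - 1 := by omega
    have hiN : i ≤ N := by
      have : a ≤ (m - 1) ^ 2 * a := Nat.le_mul_of_pos_left a (by positivity)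
      omega
    rw [Nat.cast_sub hiN, hN]
    push_cast [hcast1]
    ring
  -- rewrite the factorial * choose as descFactorial, then as a product
  have hdesc : (Nat.factorial a : ℝ) * (Nat.choose N a : ℝ)
      = ∏ i ∈ Finset.range a, (((m : ℝ) - 1) ^ 2 * a + ((m : ℝ) - 1) * (m : ℝ) - i) := by
    rw [← Nat.cast_mul, ← Nat.descFactorial_eq_factorial_mul_choose,
      Nat.descFactorial_eq_prod_range, Nat.cast_prod]
    exact Finset.prod_congr rfl hNi
  show Wg a (m : ℝ) = (Nat.factorial a : ℝ) * W m a / (m : ℝ) ^ (2 * a)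
  rw [eq_comm, W, Wg, ← hN]
  rw [← mul_assoc, mul_comm (Nat.factorial a : ℝ), mul_assoc, hdesc]
  rw [Finset.prod_div_distrib, Finset.prod_const, Finset.card_range, ← pow_mul,
    mul_comm 2 a, mul_div_assoc]
end
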